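/- SEP₁ ≡_W C_{#≤2} ≤_W EC₁ ≡_W SORT: the restricted separation problem is continuously Weihrauch equivalent to closed choice on Cantor space restricted to sets with at most two elements, this is continuously Weihrauch reducible to EC₁, and EC₁ is continuously Weihrauch equivalent to the sorting problem. -/

import Mathlib

open Filter Topology

abbrev Baire : Type := ℕ → ℕ

/-- The pairing `⟨p,q⟩(2n) = p(n)`, `⟨p,q⟩(2n+1) = q(n)`. -/
def pairB (p q : Baire) : Baire := fun n => if n % 2 = 0 then p (n / 2) else q (n / 2)

/-- A problem: a partial multivalued function on Baire space. -/
structure Problem where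
  dom : Set Baire
  sol : Baire → Set Baire

/-- Continuous Weihrauch reducibility. -/
def WRed (f g : Problem) : Prop :=
  ∃ (Kd Hd : Set Baire) (K H : Baire → Baire),
    ContinuousOn K Kd ∧ ContinuousOn H Hd ∧
      ∀ p ∈ f.dom, p ∈ Kd ∧ K p ∈ g.dom ∧
        ∀ q ∈ g.sol (K p), pairB p q ∈ Hd ∧ H (pairB p q) ∈ f.sol p

/-- Strong continuous Weihrauch reducibility. -/
def SWRed (f g : Problem) : Prop :=
  ∃ (Kd Hd : Set Baire) (K H : Baire → Baire),
    ContinuousOn K Kd ∧ ContinuousOn H Hd ∧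
      ∀ p ∈ f.dom, p ∈ Kd ∧ K p ∈ g.dom ∧
        ∀ q ∈ g.sol (K p), q ∈ Hd ∧ H q ∈ f.sol p

def WEquiv (f g : Problem) : Prop := WRed f g ∧ WRed g f
def SWEquiv (f g : Problem) : Prop := SWRed f g ∧ SWRed g f
def WLt (f g : Problem) : Prop := WRed f g ∧ ¬ WRed g f

/-- `range(p-1)`. -/
def rangeM (p : Baire) : Set ℕ := {n | ∃ i, p i = n + 1}

/-- Characteristic function of a set of naturals. -/
noncomputable def chi (A : Set ℕ) : Baire := A.indicator fun _ => 1

noncomputable def EC : Problem where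
  dom := Set.univ
  sol := fun p => {chi (rangeM p)}

noncomputable def EC1 : Problem where
  dom := {p | ((rangeM p)ᶜ).encard ≤ 1}
  sol := fun p => {chi (rangeM p)}

def pfst (r : Baire) : Baire := fun n => r (2 * n)
def psnd (r : Baire) : Baire := fun n => r (2 * n + 1)

noncomputable def SEP : Problem where
  dom := {r | rangeM (pfst r) ∩ rangeM (psnd r) = ∅}
  sol := fun r =>
    {s | ∃ A : Set ℕ, s = chi A ∧ rangeM (pfst r) ⊆ A ∧ A ⊆ (rangeM (psnd r))ᶜ}

noncomputable def SEP1 : Problem where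
  dom := {r | rangeM (pfst r) ∩ rangeM (psnd r) = ∅ ∧
    ((rangeM (pfst r) ∪ rangeM (psnd r))ᶜ).encard ≤ 1}
  sol := SEP.sol

/- rationals -/
def ratEnum (i : ℕ) : ℚ :=
  ((i.unpair.1 : ℚ) - (i.unpair.2.unpair.1 : ℚ)) / ((i.unpair.2.unpair.2 : ℚ) + 1)

def rhoCauchy (p : Baire) (x : ℝ) : Prop :=
  ∀ n, |(ratEnum (p n) : ℝ) - x| ≤ (2 : ℝ) ^ (-(n : ℤ))

def rhoNaive (p : Baire) (x : ℝ) : Prop :=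
  Tendsto (fun n => ((ratEnum (p n) : ℝ))) atTop (nhds x)

def rhoLt (p : Baire) (x : ℝ) : Prop := rangeM p = {n | (ratEnum n : ℝ) < x}
def rhoGt (p : Baire) (x : ℝ) : Prop := rangeM p = {n | x < (ratEnum n : ℝ)}

def rhoCfLt (p : Baire) (x : ℝ) : Prop :=
  (∀ n, p n ≤ 1) ∧ ∀ n, (p n = 1 ↔ (ratEnum n : ℝ) < x)
def rhoCfGt (p : Baire) (x : ℝ) : Prop :=
  (∀ n, p n ≤ 1) ∧ ∀ n, (p n = 1 ↔ x < (ratEnum n : ℝ))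

noncomputable def cfTail : List ℕ → ℝ
  | [] => 0
  | b :: l => 1 / ((b : ℝ) + cfTail l)

noncomputable def cfApprox (p : Baire) (k : ℕ) : ℝ :=
  ((Denumerable.ofNat ℤ (p 0) : ℤ) : ℝ) + cfTail ((List.range k).map fun i => p (i + 1))

def rhoCf (p : Baire) (x : ℝ) : Prop :=
  ((∀ i, 1 ≤ i → 1 ≤ p i) ∧ Tendsto (cfApprox p) atTop (nhds x)) ∨
    (∃ k, 1 ≤ k ∧ p k = 0 ∧ (∀ i, 1 ≤ i → i < k → 1 ≤ p i) ∧
      (2 ≤ k → 2 ≤ p (k - 1)) ∧ x = cfApprox p (k - 1))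

def rhoDec (p : Baire) (x : ℝ) : Prop :=
  (∀ n, 1 ≤ n → p n ≤ 9) ∧
    x = ((Denumerable.ofNat ℤ (p 0) : ℤ) : ℝ) + ∑' n : ℕ, (p (n + 1) : ℝ) / 10 ^ (n + 1)

/-- The implication problem between two representations of ℝ. -/
def implProblem (d1 d2 : Baire → ℝ → Prop) : Problem where
  dom := {p | ∃ x, d1 p x}
  sol := fun p => {q | ∃ x, d1 p x ∧ d2 q x}

/- trees / WKL / choice on Cantor space -/
def wordCode : List Bool → ℕ
  | [] => 0
  | b :: w => 2 * wordCode w + (if b then 2 else 1)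

def prefixList (x : Baire) (k : ℕ) : List Bool := (List.range k).map fun i => decide (x i = 1)

def isTreeCode (t : Baire) : Prop :=
  (∀ n, t n ≤ 1) ∧
    ∀ w v : List Bool, w <+: v → t (wordCode v) = 1 → t (wordCode w) = 1

def WKL : Problem where
  dom := {t | isTreeCode t ∧ {w : List Bool | t (wordCode w) = 1}.Infinite}
  sol := fun t => {x | (∀ n, x n ≤ 1) ∧ ∀ k, t (wordCode (prefixList x k)) = 1}

def Ap (p : Baire) : Set Baire :=
  {x | (∀ n, x n ≤ 1) ∧ ∀ k, wordCode (prefixList x k) ∉ rangeM p}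

def CCantor : Problem where
  dom := {p | (Ap p).Nonempty}
  sol := Ap

def Cle2 : Problem where
  dom := {p | (Ap p).Nonempty ∧ (Ap p).encard ≤ 2}
  sol := Ap

/- limit and parallelization -/
def projCount (r : Baire) (n : ℕ) : Baire := fun k => r (Nat.pair n k)

def limP : Problem where
  dom := {r | ∃ q : Baire, ∀ k, Tendsto (fun n => projCount r n k) atTop (nhds (q k))}
  sol := fun r => {q | ∀ k, Tendsto (fun n => projCount r n k) atTop (nhds (q k))}

def parallel (f : Problem) : Problem where
  dom := {r | ∀ n, projCount r n ∈ f.dom}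
  sol := fun r => {s | ∀ n, projCount s n ∈ f.sol (projCount r n)}

def MCT : Problem where
  dom := {r | ∃ xs : ℕ → ℝ, (∀ n, rhoCauchy (projCount r n) (xs n)) ∧
    Monotone xs ∧ BddAbove (Set.range xs)}
  sol := fun r => {q | ∃ xs : ℕ → ℝ, (∀ n, rhoCauchy (projCount r n) (xs n)) ∧
    Monotone xs ∧ BddAbove (Set.range xs) ∧ rhoCauchy q (⨆ n, xs n)}

/- SORT and RAT -/
open Classical in
noncomputable def sortOut (p : Baire) : Baire := fun k =>
  if {i | p i = 0}.Infinite then 0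
  else if k < {i | p i = 0}.ncard then 0 else 1

noncomputable def SORT : Problem where
  dom := {p | ∀ n, p n ≤ 1}
  sol := fun p => {sortOut p}

def znk (n : ℕ) : Baire := fun k => if k < n then 0 else 1

def RAT : Problem where
  dom := {p | ∃ x, rhoCauchy p x}
  sol := fun p => {s | ∃ x, rhoCauchy p x ∧
    ((∃ n, x = (ratEnum n : ℝ) ∧ s = znk n) ∨
      ((∀ r : ℚ, x ≠ (r : ℝ)) ∧ s = fun _ => 0))}

/- omniscience principles -/
def projFin (m i : ℕ) (r : Baire) : Baire := fun k => r (m * k + i - 1)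
def isZeroSeq (p : Baire) : Prop := ∀ k, p k = 0
def constSeq (i : ℕ) : Baire := fun _ => i

noncomputable def LPOn (n : ℕ) : Problem where
  dom := Set.univ
  sol := fun r => {constSeq ({i | 1 ≤ i ∧ i ≤ n ∧ isZeroSeq (projFin n i r)}.ncard)}

def LLPOn (n : ℕ) : Problem where
  dom := {r | {i | 1 ≤ i ∧ i ≤ n ∧ ¬ isZeroSeq (projFin n i r)}.encard ≤ 1}
  sol := fun r => {s | ∃ i, 1 ≤ i ∧ i ≤ n ∧ isZeroSeq (projFin n i r) ∧ s = constSeq i}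

def MLPOn (n : ℕ) : Problem where
  dom := {r | ∃ i, 1 ≤ i ∧ i ≤ n ∧ isZeroSeq (projFin n i r)}
  sol := fun r => {s | ∃ i, 1 ≤ i ∧ i ≤ n ∧ isZeroSeq (projFin n i r) ∧ s = constSeq i}

def LPO : Problem where
  dom := Set.univ
  sol := fun p => {s | (isZeroSeq p ∧ s = constSeq 1) ∨ (¬ isZeroSeq p ∧ s = constSeq 0)}

/- choice problems on ℕ etc. -/
def Cfin (n : ℕ) : Problem where
  dom := {p | ∃ i, i < n ∧ i ∉ rangeM p}
  sol := fun p => {s | ∃ i, i < n ∧ i ∉ rangeM p ∧ s = constSeq i}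

def ACCfin (n : ℕ) : Problem where
  dom := {p | (∃ i, i < n ∧ i ∉ rangeM p) ∧ ({i | i < n} ∩ rangeM p).encard ≤ 1}
  sol := (Cfin n).sol

def CNat : Problem where
  dom := {p | ∃ i, i ∉ rangeM p}
  sol := fun p => {s | ∃ i, i ∉ rangeM p ∧ s = constSeq i}

/- differentiation -/
instance : Countable (AddMonoidAlgebra ℚ ℕ) :=
  AddMonoidAlgebra.coeff_injective.countable

instance : Countable (Polynomial ℚ) :=
  Polynomial.toFinsupp_injective.countable

noncomputable def polyEnum : ℕ → Polynomial ℚ :=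
  (exists_surjective_nat (Polynomial ℚ)).choose

noncomputable def polyFun (k : ℕ) : C(Set.Icc (0:ℝ) 1, ℝ) :=
  ⟨fun x => ((polyEnum k).map (algebraMap ℚ ℝ)).eval (x : ℝ),
   (((polyEnum k).map (algebraMap ℚ ℝ)).continuous).comp continuous_subtype_val⟩

noncomputable def deltaC (p : Baire) (f : C(Set.Icc (0:ℝ) 1, ℝ)) : Prop :=
  ∀ n, ‖f - polyFun (p n)‖ ≤ (2 : ℝ) ^ (-(n : ℤ))

def IsDerivOn (f g : C(Set.Icc (0:ℝ) 1, ℝ)) : Prop :=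
  ∀ x : Set.Icc (0:ℝ) 1,
    HasDerivWithinAt (Set.IccExtend (by norm_num : (0:ℝ) ≤ 1) f) (g x) (Set.Icc 0 1) (x : ℝ)

noncomputable def diffP : Problem where
  dom := {p | ∃ f g, deltaC p f ∧ IsDerivOn f g}
  sol := fun p => {q | ∃ f g, deltaC p f ∧ IsDerivOn f g ∧ deltaC q g}


-- ══════════════════ auxiliary material ══════════════════

section Aux

lemma pfst_pairB (p q : Baire) : pfst (pairB p q) = p := by
  funext n
  simp [pfst, pairB, Nat.mul_mod_right, Nat.mul_div_cancel_left _ (by norm_num : 0 < 2)]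

lemma psnd_pairB (p q : Baire) : psnd (pairB p q) = q := by
  funext n
  have h1 : (2 * n + 1) % 2 = 1 := by omega
  have h2 : (2 * n + 1) / 2 = n := by omega
  simp [psnd, pairB, h1, h2]

open Classical in
lemma chi_apply (A : Set ℕ) (n : ℕ) : chi A n = if n ∈ A then 1 else 0 := by
  classical
  simp [chi, Set.indicator_apply]

lemma chi_le_one (A : Set ℕ) (n : ℕ) : chi A n ≤ 1 := by
  rw [chi_apply]; split <;> omega

lemma chi_eq_one_iff (A : Set ℕ) (n : ℕ) : chi A n = 1 ↔ n ∈ A := by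
  rw [chi_apply]; split <;> simp_all

lemma chi_eq_zero_iff (A : Set ℕ) (n : ℕ) : chi A n = 0 ↔ n ∉ A := by
  rw [chi_apply]; split <;> simp_all

lemma chi_eq_of_binary (x : Baire) (hx : ∀ n, x n ≤ 1) : x = chi {n | x n = 1} := by
  funext n
  rw [chi_apply]
  split <;> rename_i h
  · exact h
  · have := hx n; simp only [Set.mem_setOf_eq] at h; omega

lemma continuousOn_of_finite_dep (H : Baire → Baire) (S : Set Baire)
    (h : ∀ r ∈ S, ∀ k, ∃ F : Finset ℕ,
      ∀ r' ∈ S, (∀ i ∈ F, r' i = r i) → H r' k = H r k) :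
    ContinuousOn H S := by
  intro r hr
  rw [continuousWithinAt_pi]
  intro k
  obtain ⟨F, hF⟩ := h r hr k
  have hV : {r' : Baire | ∀ i ∈ F, r' i = r i} ∈ 𝓝 r := by
    have hop : IsOpen {r' : Baire | ∀ i ∈ F, r' i = r i} := by
      have : {r' : Baire | ∀ i ∈ F, r' i = r i} = ⋂ i ∈ F, (fun r' : Baire => r' i) ⁻¹' {r i} := by
        ext; simp [Set.mem_iInter]
      rw [this]
      exact isOpen_biInter_finset fun i _ =>
        (continuous_apply i).isOpen_preimage _ (isOpen_discrete _)
    exact hop.mem_nhds (by simp)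
  have hev : ∀ᶠ r' in 𝓝[S] r, H r' k = H r k := by
    filter_upwards [mem_nhdsWithin_of_mem_nhds hV, self_mem_nhdsWithin] with r' h1 h2
    exact hF r' h2 h1
  exact Tendsto.congr' (by filter_upwards [hev] with a ha using ha.symm) tendsto_const_nhds

lemma continuous_pfst : Continuous pfst :=
  continuous_pi fun n => continuous_apply (2 * n)

lemma continuous_psnd : Continuous psnd :=
  continuous_pi fun n => continuous_apply (2 * n + 1)

lemma continuous_pairB : Continuous (fun rc : Baire × Baire => pairB rc.1 rc.2) := by
  apply continuous_pi
  intro n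
  simp only [pairB]
  by_cases h : n % 2 = 0
  · simp only [h, if_true]
    exact (continuous_apply (n / 2)).comp continuous_fst
  · simp only [h, if_false]
    exact (continuous_apply (n / 2)).comp continuous_snd

open Classical in
lemma rangeM_enum (C : ℕ → ℕ → Prop) :
    rangeM (fun m => if C m.unpair.1 m.unpair.2 then m.unpair.1 + 1 else 0)
      = {a | ∃ t, C a t} := by
  ext n
  constructor
  · rintro ⟨m, hm⟩
    by_cases h : C m.unpair.1 m.unpair.2
    · simp only [if_pos h] at hm
      exact ⟨m.unpair.2, by rwa [Nat.succ_injective hm] at h⟩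
    · simp only [if_neg h] at hm; omega
  · rintro ⟨t, ht⟩
    exact ⟨Nat.pair n t, by simp [Nat.unpair_pair, ht]⟩

lemma WRed_trans {f g h : Problem} (hfg : WRed f g) (hgh : WRed g h) : WRed f h := by
  obtain ⟨Kd1, Hd1, K1, H1, hK1, hH1, hc1⟩ := hfg
  obtain ⟨Kd2, Hd2, K2, H2, hK2, hH2, hc2⟩ := hgh
  set Hd' : Set Baire := {r | pfst r ∈ Kd1 ∧ pairB (K1 (pfst r)) (psnd r) ∈ Hd2 ∧
      pairB (pfst r) (H2 (pairB (K1 (pfst r)) (psnd r))) ∈ Hd1} with hHd'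
  refine ⟨Kd1 ∩ K1 ⁻¹' Kd2, Hd', K2 ∘ K1,
    fun r => H1 (pairB (pfst r) (H2 (pairB (K1 (pfst r)) (psnd r)))),
    ?_, ?_, ?_⟩
  · exact hK2.comp (hK1.mono Set.inter_subset_left) fun x hx => hx.2
  · have c1 : ContinuousOn (fun r => K1 (pfst r)) Hd' :=
      hK1.comp continuous_pfst.continuousOn (fun r hr => hr.1)
    have cG2 : ContinuousOn (fun r => pairB (K1 (pfst r)) (psnd r)) Hd' :=
      continuous_pairB.comp_continuousOn (c1.prodMk continuous_psnd.continuousOn)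
    have cH2 : ContinuousOn (fun r => H2 (pairB (K1 (pfst r)) (psnd r))) Hd' :=
      hH2.comp cG2 (fun r hr => hr.2.1)
    have cG1 : ContinuousOn
        (fun r => pairB (pfst r) (H2 (pairB (K1 (pfst r)) (psnd r)))) Hd' :=
      continuous_pairB.comp_continuousOn (continuous_pfst.continuousOn.prodMk cH2)
    exact hH1.comp cG1 (fun r hr => hr.2.2)
  · intro p hp
    obtain ⟨hp1, hp2, hp3⟩ := hc1 p hp
    obtain ⟨hq1, hq2, hq3⟩ := hc2 (K1 p) hp2
    refine ⟨⟨hp1, hq1⟩, hq2, ?_⟩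
    intro q hq
    obtain ⟨m1, m2⟩ := hq3 q hq
    obtain ⟨n1, n2⟩ := hp3 (H2 (pairB (K1 p) q)) m2
    refine ⟨?_, ?_⟩
    · simp only [hHd', Set.mem_setOf_eq, pfst_pairB, psnd_pairB]
      exact ⟨hp1, m1, n1⟩
    · simpa only [pfst_pairB, psnd_pairB] using n2

lemma exists_uniform_bound {α : Type*} (L : List α) (P : α → ℕ → Prop)
    (mono : ∀ a s t, s ≤ t → P a s → P a t) (h : ∀ a ∈ L, ∃ t, P a t) :
    ∃ T, ∀ a ∈ L, P a T := by
  induction L with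
  | nil => exact ⟨0, by simp⟩
  | cons a L ih =>
    obtain ⟨T, hT⟩ := ih (fun b hb => h b (List.mem_cons_of_mem a hb))
    obtain ⟨t, ht⟩ := h a (List.mem_cons_self)
    refine ⟨max t T, ?_⟩
    intro b hb
    rcases List.mem_cons.1 hb with rfl | hb
    · exact mono b t _ (le_max_left _ _) ht
    · exact mono b T _ (le_max_right _ _) (hT b hb)

end Aux


section Count

/-- number of zeros among `p 0, …, p (t-1)` -/
def zc (p : Baire) (t : ℕ) : ℕ := ((Finset.range t).filter (fun i => p i = 0)).card

lemma zc_mono (p : Baire) : Monotone (zc p) := fun s t hst =>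
  Finset.card_le_card (Finset.filter_subset_filter _ (Finset.range_subset_range.2 hst))

lemma zc_succ (p : Baire) (t : ℕ) :
    zc p (t + 1) = zc p t + (if p t = 0 then 1 else 0) := by
  unfold zc
  rw [Finset.range_add_one, Finset.filter_insert]
  split
  · rw [Finset.card_insert_of_notMem (by simp)]
  · simp

lemma zc_congr {p p' : Baire} (t : ℕ) (h : ∀ i < t, p' i = p i) : zc p' t = zc p t := by
  unfold zc
  congr 1
  apply Finset.filter_congr
  intro x hx
  rw [h x (Finset.mem_range.1 hx)]

lemma zc_le_card (p : Baire) (hfin : {i | p i = 0}.Finite) (t : ℕ) :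
    zc p t ≤ hfin.toFinset.card := by
  apply Finset.card_le_card
  intro i hi
  simp only [Finset.mem_filter, Finset.mem_range] at hi
  simp only [Set.Finite.mem_toFinset, Set.mem_setOf_eq]
  exact hi.2

lemma exists_zc_eq (p : Baire) (hfin : {i | p i = 0}.Finite) :
    ∃ T, ∀ t, T ≤ t → zc p t = hfin.toFinset.card := by
  refine ⟨hfin.toFinset.sup id + 1, fun t ht => ?_⟩
  unfold zc
  congr 1
  ext i
  simp only [Finset.mem_filter, Finset.mem_range, Set.Finite.mem_toFinset, Set.mem_setOf_eq]
  constructor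
  · exact fun h => h.2
  · intro h
    refine ⟨?_, h⟩
    have : i ≤ hfin.toFinset.sup id :=
      Finset.le_sup (f := id) (by simp [Set.Finite.mem_toFinset, h])
    omega

lemma zc_unbounded (p : Baire) (hinf : {i | p i = 0}.Infinite) (k : ℕ) :
    ∃ t, k < zc p t := by
  obtain ⟨F, hFsub, hFcard⟩ := hinf.exists_subset_card_eq (k + 1)
  refine ⟨F.sup id + 1, ?_⟩
  have hsub : F ⊆ (Finset.range (F.sup id + 1)).filter (fun i => p i = 0) := by
    intro i hi
    simp only [Finset.mem_filter, Finset.mem_range]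
    exact ⟨Nat.lt_succ_of_le (Finset.le_sup (f := id) hi), hFsub hi⟩
  have := Finset.card_le_card hsub
  unfold zc
  omega

open Classical in
lemma sortOut_eq_ite (p : Baire) :
    sortOut p = fun k => if ∃ t, k < zc p t then 0 else 1 := by
  funext k
  unfold sortOut
  by_cases hinf : {i | p i = 0}.Infinite
  · rw [if_pos hinf, if_pos (zc_unbounded p hinf k)]
  · rw [if_neg hinf]
    have hfin := Set.not_infinite.1 hinf
    have hncard : {i | p i = 0}.ncard = hfin.toFinset.card := by
      rw [← Set.ncard_coe_finset, Set.Finite.coe_toFinset]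
    by_cases h : k < {i | p i = 0}.ncard
    · rw [if_pos h, if_pos ?_]
      obtain ⟨T, hT⟩ := exists_zc_eq p hfin
      exact ⟨T, by rw [hT T le_rfl]; omega⟩
    · rw [if_neg h, if_neg ?_]
      rintro ⟨t, ht⟩
      have := zc_le_card p hfin t
      omega

end Count

section ECSORT

lemma cE_ex (p : Baire) (t : ℕ) : ∃ n, ∀ i < t, p i ≠ n + 1 := by
  refine ⟨(Finset.range t).sup p, fun i hi h => ?_⟩
  have := Finset.le_sup (f := p) (Finset.mem_range.2 hi)
  omega

noncomputable def cE (p : Baire) (t : ℕ) : ℕ := Nat.find (cE_ex p t)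

lemma cE_spec (p : Baire) (t : ℕ) : ∀ i < t, p i ≠ cE p t + 1 := Nat.find_spec (cE_ex p t)

lemma cE_le (p : Baire) (t m : ℕ) (hm : ∀ i, p i ≠ m + 1) : cE p t ≤ m :=
  Nat.find_le (fun i _ => hm i)

lemma cE_mono (p : Baire) : Monotone (cE p) := fun s t hst =>
  Nat.find_min' _ (fun i hi => cE_spec p t i (lt_of_lt_of_le hi hst))

lemma cE_congr {p p' : Baire} (t : ℕ) (h : ∀ i < t, p' i = p i) : cE p' t = cE p t := by
  apply le_antisymm
  · exact Nat.find_min' _ (fun i hi hh => cE_spec p t i hi (by rw [← h i hi]; exact hh))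
  · exact Nat.find_min' _ (fun i hi hh => cE_spec p' t i hi (by rw [h i hi]; exact hh))

lemma cE_ge (p : Baire) (T m : ℕ) (h : ∀ j < m, ∃ i < T, p i = j + 1) : m ≤ cE p T := by
  by_contra hlt
  push_neg at hlt
  obtain ⟨i, hi, hpi⟩ := h (cE p T) hlt
  exact cE_spec p T i hi hpi

noncomputable def zq (p : Baire) : ℕ → ℕ
  | 0 => 0
  | t + 1 => if zq p t < cE p t then zq p t + 1 else zq p t

noncomputable def KE (p : Baire) : Baire := fun t => if zq p t < cE p t then 0 else 1

lemma zq_mono (p : Baire) : Monotone (zq p) := by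
  apply monotone_nat_of_le_succ
  intro t
  show zq p t ≤ if zq p t < cE p t then zq p t + 1 else zq p t
  split <;> omega

lemma zq_congr {p p' : Baire} (t : ℕ) (h : ∀ i < t, p' i = p i) : zq p' t = zq p t := by
  induction t with
  | zero => rfl
  | succ t ih =>
    have ht : ∀ i < t, p' i = p i := fun i hi => h i (by omega)
    show (if zq p' t < cE p' t then zq p' t + 1 else zq p' t) =
      (if zq p t < cE p t then zq p t + 1 else zq p t)
    rw [ih ht, cE_congr t ht]

lemma zc_KE (p : Baire) (t : ℕ) : zc (KE p) t = zq p t := by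
  induction t with
  | zero => rfl
  | succ t ih =>
    rw [zc_succ, ih]
    show zq p t + _ = (if zq p t < cE p t then zq p t + 1 else zq p t)
    by_cases h : zq p t < cE p t <;> simp [KE, h]

lemma zq_le (p : Baire) (m : ℕ) (h : ∀ t, cE p t ≤ m) : ∀ t, zq p t ≤ m := by
  intro t
  induction t with
  | zero => exact Nat.zero_le m
  | succ t ih =>
    show (if zq p t < cE p t then zq p t + 1 else zq p t) ≤ m
    have := h t
    split <;> omega

lemma zq_climb (p : Baire) (T c : ℕ) (h : ∀ t, T ≤ t → c ≤ cE p t) :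
    ∀ k, min c k ≤ zq p (T + k) := by
  intro k
  induction k with
  | zero => simp
  | succ k ih =>
    have hstep : zq p (T + (k + 1)) =
        (if zq p (T + k) < cE p (T + k) then zq p (T + k) + 1 else zq p (T + k)) := rfl
    rw [hstep]
    have hc := h (T + k) (by omega)
    split <;> omega

/-- uniform enumeration bound below `m` -/
lemma below_bound (p : Baire) (m : ℕ) (h : ∀ j < m, ∃ i, p i = j + 1) :
    ∃ T, ∀ j < m, ∃ i < T, p i = j + 1 := by
  obtain ⟨T, hT⟩ := exists_uniform_bound (List.range m) (fun j t => ∃ i < t, p i = j + 1)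
    (fun a s t hst ⟨i, hi, hpi⟩ => ⟨i, by omega, hpi⟩)
    (fun j hj => by
      obtain ⟨i, hi⟩ := h j (List.mem_range.1 hj)
      exact ⟨i + 1, i, by omega, hi⟩)
  exact ⟨T, fun j hj => hT j (List.mem_range.2 hj)⟩

lemma sortKE_of_missing (p : Baire) (m : ℕ) (hc : (rangeM p)ᶜ = {m}) :
    sortOut (KE p) = fun k => if k < m then 0 else 1 := by
  classical
  have hm : ∀ i, p i ≠ m + 1 := by
    intro i hi
    have : m ∈ (rangeM p)ᶜ := by rw [hc]; rfl
    exact this ⟨i, hi⟩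
  have hj : ∀ j < m, ∃ i, p i = j + 1 := by
    intro j hjm
    by_contra hno
    push_neg at hno
    have : j ∈ (rangeM p)ᶜ := by
      intro ⟨i, hi⟩
      exact hno i hi
    rw [hc, Set.mem_singleton_iff] at this
    omega
  have hle : ∀ t, cE p t ≤ m := fun t => cE_le p t m hm
  obtain ⟨T₀, hT₀⟩ := below_bound p m hj
  have hcEeq : ∀ t, T₀ ≤ t → cE p t = m := by
    intro t ht
    have h1 : m ≤ cE p T₀ := cE_ge p T₀ m hT₀
    have h2 := cE_mono p ht
    have := hle t
    omega
  have hzle : ∀ t, zq p t ≤ m := zq_le p m hle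
  have hreach : zq p (T₀ + m) = m := by
    have := zq_climb p T₀ m (fun t ht => (hcEeq t ht).ge) m
    have := hzle (T₀ + m)
    omega
  have hSsub : {i | KE p i = 0} ⊆ Set.Iio (T₀ + m) := by
    intro i hi
    simp only [Set.mem_Iio]
    by_contra hge
    push_neg at hge
    have h1 : zq p i = m := by
      have := zq_mono p hge
      have := hzle i
      omega
    have h2 : cE p i ≤ m := hle i
    simp only [Set.mem_setOf_eq, KE] at hi
    rw [if_neg (by omega)] at hi
    omega
  have hfin : {i | KE p i = 0}.Finite := (Set.finite_Iio _).subset hSsub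
  have hninf : ¬ {i | KE p i = 0}.Infinite := Set.not_infinite.2 hfin
  have hncard : {i | KE p i = 0}.ncard = m := by
    obtain ⟨T, hT⟩ := exists_zc_eq (KE p) hfin
    have h1 : zc (KE p) (max T (T₀ + m)) = hfin.toFinset.card := hT _ (le_max_left _ _)
    have h2 : zq p (max T (T₀ + m)) = m := by
      have := zq_mono p (le_max_right T (T₀ + m))
      have := hzle (max T (T₀ + m))
      omega
    rw [← Set.ncard_coe_finset, Set.Finite.coe_toFinset] at h1
    rw [← h1, zc_KE]
    exact h2
  funext k
  unfold sortOut
  rw [if_neg hninf, hncard]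

lemma sortKE_of_full (p : Baire) (hc : (rangeM p)ᶜ = ∅) :
    sortOut (KE p) = fun _ => 0 := by
  classical
  have hall : ∀ j, ∃ i, p i = j + 1 := by
    intro j
    by_contra hno
    push_neg at hno
    have : j ∈ (rangeM p)ᶜ := fun ⟨i, hi⟩ => hno i hi
    rw [hc] at this
    exact this
  have hinf : {i | KE p i = 0}.Infinite := by
    intro hfin
    obtain ⟨k, hk⟩ : ∃ k, ∀ t, zc (KE p) t ≤ k :=
      ⟨hfin.toFinset.card, fun t => zc_le_card (KE p) hfin t⟩
    obtain ⟨T₀, hT₀⟩ := below_bound p (k + 1) (fun j _ => hall j)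
    have h1 : ∀ t, T₀ ≤ t → k + 1 ≤ cE p t := by
      intro t ht
      have := cE_ge p T₀ (k + 1) hT₀
      have := cE_mono p ht
      omega
    have h2 := zq_climb p T₀ (k + 1) h1 (k + 1)
    have h3 := hk (T₀ + (k + 1))
    rw [zc_KE] at h3
    omega
  funext k
  unfold sortOut
  rw [if_pos hinf]

lemma compl_cases (p : Baire) (h : ((rangeM p)ᶜ).encard ≤ 1) :
    (rangeM p)ᶜ = ∅ ∨ ∃ m, (rangeM p)ᶜ = {m} :=
  Set.encard_le_one_iff_eq.1 h

def HE : Baire → Baire := fun r k =>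
  if psnd r k = 1 ∧ (k = 0 ∨ psnd r (k - 1) = 0) then 0 else 1

lemma EC1_le_SORT' : WRed EC1 SORT := by
  classical
  refine ⟨Set.univ, Set.univ, KE, HE, ?_, ?_, ?_⟩
  · apply continuousOn_of_finite_dep
    intro p _ k
    refine ⟨Finset.range k, fun p' _ hagree => ?_⟩
    have h : ∀ i < k, p' i = p i := fun i hi => hagree i (Finset.mem_range.2 hi)
    show (if zq p' k < cE p' k then 0 else 1) = (if zq p k < cE p k then 0 else 1)
    rw [zq_congr k h, cE_congr k h]
  · apply continuousOn_of_finite_dep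
    intro r _ k
    refine ⟨{2 * k + 1, 2 * (k - 1) + 1}, fun r' _ hagree => ?_⟩
    have h1 : psnd r' k = psnd r k := hagree _ (by simp)
    have h2 : psnd r' (k - 1) = psnd r (k - 1) := hagree _ (by simp)
    unfold HE
    rw [h1, h2]
  · intro p hp
    have hp' : ((rangeM p)ᶜ).encard ≤ 1 := hp
    refine ⟨trivial, fun t => by unfold KE; split <;> omega, ?_⟩
    intro q hq
    have hq : q = sortOut (KE p) := hq
    refine ⟨trivial, ?_⟩
    show HE (pairB p q) = chi (rangeM p)
    rcases compl_cases p hp' with he | ⟨m, hm⟩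
    · have hq' : ∀ j, q j = 0 := by rw [hq, sortKE_of_full p he]; intro j; rfl
      have hall : rangeM p = Set.univ := Set.compl_empty_iff.1 he
      funext k
      unfold HE
      rw [psnd_pairB, hq' k, chi_apply, hall, if_pos (Set.mem_univ k), if_neg (by simp)]
    · have hq' : ∀ j, q j = if j < m then 0 else 1 := by
        rw [hq, sortKE_of_missing p m hm]; intro j; rfl
      have hmem : (k : ℕ) → ((k ∈ rangeM p) ↔ ¬(k = m)) := by
        intro k
        have h0 : k ∈ (rangeM p)ᶜ ↔ k ∈ ({m} : Set ℕ) := by rw [hm]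
        simp only [Set.mem_compl_iff, Set.mem_singleton_iff] at h0
        tauto
      funext k
      unfold HE
      rw [psnd_pairB, hq' k, hq' (k - 1), chi_apply]
      simp only [hmem k]
      split_ifs <;> simp_all <;> omega

def CS (p : Baire) (a s : ℕ) : Prop :=
  zc p a.unpair.2 ≠ a.unpair.1 ∨ (0 < a.unpair.2 ∧ zc p (a.unpair.2 - 1) = a.unpair.1) ∨
    a.unpair.1 < zc p s

open Classical in
noncomputable def KS (p : Baire) : Baire :=
  fun m => if CS p m.unpair.1 m.unpair.2 then m.unpair.1 + 1 else 0

lemma rangeM_KS (p : Baire) : rangeM (KS p) = {a | ∃ s, CS p a s} := rangeM_enum _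

lemma not_mem_rangeM_KS (p : Baire) (a : ℕ) :
    a ∉ rangeM (KS p) ↔
      (zc p a.unpair.2 = a.unpair.1 ∧ (a.unpair.2 = 0 ∨ zc p (a.unpair.2 - 1) ≠ a.unpair.1) ∧
        ∀ s, zc p s ≤ a.unpair.1) := by
  rw [rangeM_KS]
  simp only [Set.mem_setOf_eq, not_exists, CS]
  constructor
  · intro h
    have h0 := h 0
    push_neg at h0
    refine ⟨h0.1, ?_, fun s => ?_⟩
    · rcases Nat.eq_zero_or_pos a.unpair.2 with hz | hz
      · exact Or.inl hz
      · exact Or.inr (h0.2.1 hz)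
    · have := h s
      push_neg at this
      exact this.2.2
  · rintro ⟨h1, h2, h3⟩ s
    push_neg
    refine ⟨h1, fun hz => ?_, h3 s⟩
    rcases h2 with h2 | h2
    · omega
    · exact h2

lemma KS_encard (p : Baire) : ((rangeM (KS p))ᶜ).encard ≤ 1 := by
  rw [Set.encard_le_one_iff]
  intro a b ha hb
  rw [Set.mem_compl_iff, not_mem_rangeM_KS] at ha hb
  obtain ⟨ha1, ha2, ha3⟩ := ha
  obtain ⟨hb1, hb2, hb3⟩ := hb
  have hj : a.unpair.1 = b.unpair.1 := by
    have h1 := ha3 b.unpair.2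
    have h2 := hb3 a.unpair.2
    omega
  have ht : a.unpair.2 = b.unpair.2 := by
    rcases Nat.lt_trichotomy a.unpair.2 b.unpair.2 with h | h | h
    · exfalso
      have hb0 : 0 < b.unpair.2 := by omega
      have hle : a.unpair.2 ≤ b.unpair.2 - 1 := by omega
      have m1 := zc_mono p hle
      have m2 := zc_mono p (show b.unpair.2 - 1 ≤ b.unpair.2 by omega)
      rcases hb2 with hb2 | hb2 <;> omega
    · exact h
    · exfalso
      have ha0 : 0 < a.unpair.2 := by omega
      have hle : b.unpair.2 ≤ a.unpair.2 - 1 := by omega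
      have m1 := zc_mono p hle
      have m2 := zc_mono p (show a.unpair.2 - 1 ≤ a.unpair.2 by omega)
      rcases ha2 with ha2 | ha2 <;> omega
  have := Nat.pair_unpair a
  have := Nat.pair_unpair b
  rw [← Nat.pair_unpair a, ← Nat.pair_unpair b, hj, ht]

open Classical in
noncomputable def HS : Baire → Baire :=
  fun r k => if ∃ t, k < zc (pfst r) t then 0 else 1

def HdS : Set Baire :=
  {r | psnd r = chi (rangeM (KS (pfst r)))}

lemma SORT_le_EC1' : WRed SORT EC1 := by
  classical
  refine ⟨Set.univ, HdS, KS, HS, ?_, ?_, ?_⟩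
  · apply continuousOn_of_finite_dep
    intro p _ m
    refine ⟨Finset.range (max m.unpair.1.unpair.2 m.unpair.2 + 1), fun p' _ hagree => ?_⟩
    have h : ∀ i < max m.unpair.1.unpair.2 m.unpair.2 + 1, p' i = p i :=
      fun i hi => hagree i (Finset.mem_range.2 hi)
    have hiff : CS p' m.unpair.1 m.unpair.2 ↔ CS p m.unpair.1 m.unpair.2 := by
      unfold CS
      rw [zc_congr m.unpair.1.unpair.2 (fun i hi => h i (by omega)),
        zc_congr (m.unpair.1.unpair.2 - 1) (fun i hi => h i (by omega)),
        zc_congr m.unpair.2 (fun i hi => h i (by omega))]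
    unfold KS
    exact if_congr hiff rfl rfl
  · apply continuousOn_of_finite_dep
    intro r hr k
    by_cases h : ∃ t, k < zc (pfst r) t
    · obtain ⟨t₀, ht₀⟩ := h
      refine ⟨(Finset.range t₀).image (2 * ·), fun r' _ hagree => ?_⟩
      have hzc : zc (pfst r') t₀ = zc (pfst r) t₀ := by
        apply zc_congr
        intro i hi
        exact hagree (2 * i) (Finset.mem_image.2 ⟨i, Finset.mem_range.2 hi, rfl⟩)
      unfold HS
      rw [if_pos ⟨t₀, by omega⟩, if_pos ⟨t₀, ht₀⟩]
    · set p := pfst r with hpdef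
      have hfin : {i | p i = 0}.Finite := by
        by_contra hinf
        obtain ⟨t, ht⟩ := zc_unbounded p hinf k
        exact h ⟨t, ht⟩
      set n := hfin.toFinset.card with hndef
      have hzle : ∀ s, zc p s ≤ n := zc_le_card p hfin
      obtain ⟨T, hT⟩ := exists_zc_eq p hfin
      have hnk : n ≤ k := by
        have h1 := hT T le_rfl
        push_neg at h
        have := h T
        omega
      have hex : ∃ t, zc p t = n := ⟨T, hT T le_rfl⟩
      set t₀ := Nat.find hex with ht₀def
      have ht₀ : zc p t₀ = n := Nat.find_spec hex
      have ht₀min : t₀ = 0 ∨ zc p (t₀ - 1) ≠ n := by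
        rcases Nat.eq_zero_or_pos t₀ with hz | hz
        · exact Or.inl hz
        · right
          intro hcon
          exact Nat.find_min hex (show t₀ - 1 < t₀ by omega) hcon
      set m₀ := Nat.pair n t₀ with hm₀def
      have hnot : m₀ ∉ rangeM (KS p) := by
        rw [not_mem_rangeM_KS]
        rw [hm₀def, Nat.unpair_pair]
        exact ⟨ht₀, ht₀min, hzle⟩
      refine ⟨{2 * m₀ + 1}, fun r' hr' hagree => ?_⟩
      have hps : psnd r' m₀ = psnd r m₀ := hagree _ (Finset.mem_singleton_self _)
      have hv : psnd r m₀ = 0 := by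
        rw [hr]
        exact (chi_eq_zero_iff _ _).2 hnot
      have hnot' : m₀ ∉ rangeM (KS (pfst r')) := by
        rw [← chi_eq_zero_iff, ← hr']
        rw [hps, hv]
      rw [not_mem_rangeM_KS, hm₀def, Nat.unpair_pair] at hnot'
      have hno' : ¬ ∃ t, k < zc (pfst r') t := by
        rintro ⟨t, ht⟩
        have := hnot'.2.2 t
        omega
      unfold HS
      rw [if_neg hno', if_neg h]
  · intro p hp
    refine ⟨trivial, KS_encard p, ?_⟩
    intro q hq
    have hq : q = chi (rangeM (KS p)) := hq
    constructor
    · show psnd (pairB p q) = chi (rangeM (KS (pfst (pairB p q))))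
      rw [psnd_pairB, pfst_pairB, hq]
    · show HS (pairB p q) = sortOut p
      rw [sortOut_eq_ite]
      funext k
      unfold HS
      rw [pfst_pairB]

end ECSORT

section Words

def decodeW : ℕ → List Bool
  | 0 => []
  | (n + 1) =>
    if (n + 1) % 2 = 1 then false :: decodeW (n / 2)
    else true :: decodeW ((n - 1) / 2)
decreasing_by all_goals omega

@[simp] lemma wordCode_nil : wordCode [] = 0 := rfl

lemma wordCode_cons (b : Bool) (w : List Bool) :
    wordCode (b :: w) = 2 * wordCode w + (if b then 2 else 1) := rfl

lemma decode_code (w : List Bool) : decodeW (wordCode w) = w := by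
  induction w with
  | nil => rw [wordCode_nil, decodeW]
  | cons b w ih =>
    rw [wordCode_cons]
    cases b
    · rw [if_neg (by simp)]
      have h : 2 * wordCode w + 1 = (2 * wordCode w) + 1 := rfl
      rw [h, decodeW]
      rw [if_pos (by omega)]
      rw [show 2 * wordCode w / 2 = wordCode w by omega, ih]
    · rw [if_pos rfl]
      have h : 2 * wordCode w + 2 = (2 * wordCode w + 1) + 1 := by omega
      rw [h, decodeW]
      rw [if_neg (by omega)]
      rw [show (2 * wordCode w + 1 - 1) / 2 = wordCode w by omega, ih]

lemma code_decode (n : ℕ) : wordCode (decodeW n) = n := by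
  induction n using Nat.strong_induction_on with
  | _ n ih =>
    match n with
    | 0 => rw [decodeW, wordCode_nil]
    | (m + 1) =>
      rw [decodeW]
      by_cases h : (m + 1) % 2 = 1
      · rw [if_pos h, wordCode_cons, ih (m / 2) (by omega), if_neg (by simp)]
        omega
      · rw [if_neg h, wordCode_cons, ih ((m - 1) / 2) (by omega), if_pos rfl]
        omega

lemma wordCode_injective : Function.Injective wordCode := by
  intro w w' h
  rw [← decode_code w, ← decode_code w', h]

/-- all binary words of length n -/
def allW : ℕ → List (List Bool)
  | 0 => [[]]
  | n + 1 => (allW n).flatMap (fun w => [w ++ [false], w ++ [true]])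

lemma mem_allW (v : List Bool) (n : ℕ) : v ∈ allW n ↔ v.length = n := by
  induction n generalizing v with
  | zero =>
    simp [allW, List.length_eq_zero_iff]
  | succ n ih =>
    simp only [allW, List.mem_flatMap]
    constructor
    · rintro ⟨w, hw, hv⟩
      have := (ih w).1 hw
      simp only [List.mem_cons, List.mem_singleton] at hv
      rcases hv with rfl | rfl | h
      · simp [this]
      · simp [this]
      · simp at h
    · intro hv
      have hne : v ≠ [] := by
        intro h
        rw [h] at hv
        simp at hv
      refine ⟨v.dropLast, (ih _).2 (by rw [List.length_dropLast, hv]; rfl), ?_⟩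
      have hd := List.dropLast_append_getLast hne
      simp only [List.mem_cons, List.mem_singleton]
      cases hlast : v.getLast hne
      · rw [hlast] at hd
        exact Or.inl hd.symm
      · rw [hlast] at hd
        exact Or.inr (Or.inl hd.symm)

lemma prefixList_length (x : Baire) (k : ℕ) : (prefixList x k).length = k := by
  simp [prefixList]

lemma prefixList_getElem (x : Baire) (k i : ℕ) (h : i < k)
    (h' : i < (prefixList x k).length) :
    (prefixList x k)[i] = decide (x i = 1) := by
  simp [prefixList]

lemma prefixList_take (x : Baire) {j k : ℕ} (h : j ≤ k) :
    (prefixList x k).take j = prefixList x j := by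
  unfold prefixList
  rw [← List.map_take, List.take_range, inf_eq_left.2 h]

lemma prefixList_prefix (x : Baire) {j k : ℕ} (h : j ≤ k) :
    prefixList x j <+: prefixList x k := by
  rw [← prefixList_take x h]
  exact List.take_prefix _ _

lemma chain_mono (c : ℕ → List Bool) (hpre : ∀ j, c j <+: c (j + 1)) {a b : ℕ} (h : a ≤ b) :
    c a <+: c b := by
  induction b with
  | zero => rw [Nat.le_zero.1 h]
  | succ b ihb =>
    rcases Nat.lt_succ_iff_lt_or_eq.1 (Nat.lt_succ_of_le h) with hlt | rfl
    · exact (ihb (by omega)).trans (hpre b)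
    · exact List.prefix_refl _

lemma cond_le_one (b : Bool) : (cond b 1 0 : ℕ) ≤ 1 := by cases b <;> simp

lemma chain_path (c : ℕ → List Bool) (hlen : ∀ j, (c j).length = j)
    (hpre : ∀ j, c j <+: c (j + 1)) (m : ℕ) :
    prefixList (fun k => cond ((c (k + 1)).getD k false) 1 0) m = c m := by
  apply List.ext_getElem (by rw [prefixList_length, hlen])
  intro i h1 h2
  rw [prefixList_getElem _ _ _ (by rwa [prefixList_length] at h1)]
  have hip : i < (c (i + 1)).length := by rw [hlen]; omega
  have hgd : (c (i + 1)).getD i false = (c (i + 1))[i] := List.getD_eq_getElem _ _ hip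
  have hpm : c (i + 1) <+: c m := chain_mono c hpre (by rw [hlen] at h2; omega)
  have he : (c (i + 1))[i] = (c m)[i]'h2 := hpm.getElem hip
  rw [hgd, he]
  cases h : (c m)[i] <;> simp

end Words

section SEPEC

lemma rangeM_split (r : Baire) : rangeM r = rangeM (pfst r) ∪ rangeM (psnd r) := by
  ext n
  constructor
  · rintro ⟨i, hi⟩
    rcases Nat.even_or_odd i with ⟨j, hj⟩ | ⟨j, hj⟩
    · refine Or.inl ⟨j, ?_⟩
      show r (2 * j) = n + 1
      rw [show 2 * j = i by omega]
      exact hi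
    · refine Or.inr ⟨j, ?_⟩
      show r (2 * j + 1) = n + 1
      rw [show 2 * j + 1 = i by omega]
      exact hi
  · rintro (⟨i, hi⟩ | ⟨i, hi⟩)
    · exact ⟨2 * i, hi⟩
    · exact ⟨2 * i + 1, hi⟩

open Classical in
noncomputable def HSep (r : Baire) : Baire := fun n =>
  if psnd r n = 1 then
    (if h : ∃ i, pfst (pfst r) i = n + 1 ∨ psnd (pfst r) i = n + 1 then
      (if pfst (pfst r) (Nat.find h) = n + 1 then 1 else 0)
    else 1)
  else 1

def HdSep : Set Baire := {r | psnd r = chi (rangeM (pfst r))}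

lemma SEP1_le_EC1' : WRed SEP1 EC1 := by
  classical
  refine ⟨Set.univ, HdSep, id, HSep, continuousOn_id, ?_, ?_⟩
  · apply continuousOn_of_finite_dep
    intro r hr n
    by_cases h1 : psnd r n = 1
    · have hmem : n ∈ rangeM (pfst r) := by
        rw [← chi_eq_one_iff, ← hr]
        exact h1
      have hEx : ∃ i, pfst (pfst r) i = n + 1 ∨ psnd (pfst r) i = n + 1 := by
        rw [rangeM_split (pfst r)] at hmem
        rcases hmem with ⟨i, hi⟩ | ⟨i, hi⟩
        · exact ⟨i, Or.inl hi⟩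
        · exact ⟨i, Or.inr hi⟩
      set i₀ := Nat.find hEx with hi₀def
      refine ⟨insert (2 * n + 1) (((Finset.range (i₀ + 1)).image (fun i => 2 * (2 * i))) ∪
        ((Finset.range (i₀ + 1)).image (fun i => 2 * (2 * i + 1)))), fun r' _ hagree => ?_⟩
      have hps : psnd r' n = 1 := by
        have := hagree (2 * n + 1) (Finset.mem_insert_self _ _)
        unfold psnd
        rw [this]
        exact h1
      have hag1 : ∀ i ≤ i₀, pfst (pfst r') i = pfst (pfst r) i := by
        intro i hi
        exact hagree (2 * (2 * i)) (Finset.mem_insert_of_mem (Finset.mem_union_left _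
          (Finset.mem_image.2 ⟨i, Finset.mem_range.2 (by omega), rfl⟩)))
      have hag2 : ∀ i ≤ i₀, psnd (pfst r') i = psnd (pfst r) i := by
        intro i hi
        exact hagree (2 * (2 * i + 1)) (Finset.mem_insert_of_mem (Finset.mem_union_right _
          (Finset.mem_image.2 ⟨i, Finset.mem_range.2 (by omega), rfl⟩)))
      have hEx' : ∃ i, pfst (pfst r') i = n + 1 ∨ psnd (pfst r') i = n + 1 := by
        obtain hsp := Nat.find_spec hEx
        refine ⟨i₀, ?_⟩
        rw [hag1 i₀ le_rfl, hag2 i₀ le_rfl]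
        exact hsp
      have hfind : Nat.find hEx' = i₀ := by
        rw [Nat.find_eq_iff]
        constructor
        · rw [hag1 i₀ le_rfl, hag2 i₀ le_rfl]
          exact Nat.find_spec hEx
        · intro m hm hcon
          rw [hag1 m (by omega), hag2 m (by omega)] at hcon
          exact Nat.find_min hEx hm hcon
      unfold HSep
      rw [if_pos hps, if_pos h1, dif_pos hEx', dif_pos hEx, hfind, hag1 i₀ le_rfl]
    · refine ⟨{2 * n + 1}, fun r' _ hagree => ?_⟩
      have hps : psnd r' n = psnd r n := hagree _ (Finset.mem_singleton_self _)
      unfold HSep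
      rw [hps, if_neg h1, if_neg h1]
  · intro p hp
    obtain ⟨hdisj, henc⟩ := hp
    have hdom : ((rangeM p)ᶜ).encard ≤ 1 := by
      rw [rangeM_split p]
      exact henc
    refine ⟨trivial, hdom, ?_⟩
    intro q hq
    have hq : q = chi (rangeM p) := hq
    constructor
    · show psnd (pairB p q) = chi (rangeM (pfst (pairB p q)))
      rw [psnd_pairB, pfst_pairB, hq]
    · show ∃ A, HSep (pairB p q) = chi A ∧ rangeM (pfst p) ⊆ A ∧ A ⊆ (rangeM (psnd p))ᶜ
      refine ⟨(rangeM (psnd p))ᶜ, ?_, ?_, subset_rfl⟩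
      · funext n
        have hps : psnd (pairB p q) = q := psnd_pairB p q
        have hpf : pfst (pairB p q) = p := pfst_pairB p q
        unfold HSep
        rw [hps, hpf, hq]
        by_cases hmem : n ∈ rangeM p
        · rw [if_pos ((chi_eq_one_iff _ _).2 hmem)]
          have hEx : ∃ i, pfst p i = n + 1 ∨ psnd p i = n + 1 := by
            rw [rangeM_split p] at hmem
            rcases hmem with ⟨i, hi⟩ | ⟨i, hi⟩
            · exact ⟨i, Or.inl hi⟩
            · exact ⟨i, Or.inr hi⟩
          rw [dif_pos hEx]
          by_cases hc : pfst p (Nat.find hEx) = n + 1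
          · rw [if_pos hc]
            have hnP : n ∈ rangeM (pfst p) := ⟨Nat.find hEx, hc⟩
            have hnQ : n ∉ rangeM (psnd p) := by
              intro hnQ
              have : n ∈ rangeM (pfst p) ∩ rangeM (psnd p) := ⟨hnP, hnQ⟩
              rw [hdisj] at this
              exact this
            rw [chi_apply, if_pos (show n ∈ (rangeM (psnd p))ᶜ from hnQ)]
          · rw [if_neg hc]
            have hsp := Nat.find_spec hEx
            have hnQ : n ∈ rangeM (psnd p) := ⟨Nat.find hEx, by tauto⟩
            rw [chi_apply, if_neg (show n ∉ (rangeM (psnd p))ᶜ from fun hc => hc hnQ)]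
        · rw [if_neg (by rw [chi_eq_one_iff]; exact fun h => hmem h)]
          have hnQ : n ∉ rangeM (psnd p) := by
            intro hnQ
            apply hmem
            rw [rangeM_split p]
            exact Or.inr hnQ
          rw [chi_apply, if_pos (show n ∈ (rangeM (psnd p))ᶜ from hnQ)]
      · intro n hn
        intro hnQ
        have : n ∈ rangeM (pfst p) ∩ rangeM (psnd p) := ⟨hn, hnQ⟩
        rw [hdisj] at this
        exact this

end SEPEC

section SEPCle2

def C3 (r : Baire) (a i : ℕ) : Prop :=
  ∃ j < (decodeW a).length,
    ((decodeW a).getD j false = false ∧ pfst r i = j + 1) ∨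
    ((decodeW a).getD j false = true ∧ psnd r i = j + 1)

open Classical in
noncomputable def K3 (r : Baire) : Baire :=
  fun m => if C3 r m.unpair.1 m.unpair.2 then m.unpair.1 + 1 else 0

def badW (r : Baire) (w : List Bool) : Prop :=
  ∃ j < w.length, (w.getD j false = false ∧ j ∈ rangeM (pfst r)) ∨
    (w.getD j false = true ∧ j ∈ rangeM (psnd r))

lemma mem_rangeM_K3 (r : Baire) (w : List Bool) :
    wordCode w ∈ rangeM (K3 r) ↔ badW r w := by
  unfold K3
  rw [rangeM_enum]
  simp only [Set.mem_setOf_eq]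
  unfold C3 badW
  rw [decode_code]
  constructor
  · rintro ⟨i, j, hj, (⟨h1, h2⟩ | ⟨h1, h2⟩)⟩
    · exact ⟨j, hj, Or.inl ⟨h1, ⟨i, h2⟩⟩⟩
    · exact ⟨j, hj, Or.inr ⟨h1, ⟨i, h2⟩⟩⟩
  · rintro ⟨j, hj, (⟨h1, i, h2⟩ | ⟨h1, i, h2⟩)⟩
    · exact ⟨i, j, hj, Or.inl ⟨h1, h2⟩⟩
    · exact ⟨i, j, hj, Or.inr ⟨h1, h2⟩⟩

lemma getD_prefixList (x : Baire) (k j : ℕ) (h : j < k) :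
    (prefixList x k).getD j false = decide (x j = 1) := by
  rw [List.getD_eq_getElem _ _ (by rw [prefixList_length]; exact h),
    prefixList_getElem x k j h]

lemma Ap_vals (r : Baire) (x : Baire) (hx : x ∈ Ap (K3 r)) :
    ∀ j, (j ∈ rangeM (pfst r) → x j = 1) ∧ (j ∈ rangeM (psnd r) → x j = 0) := by
  obtain ⟨hx1, hx2⟩ := hx
  intro j
  have hnb : ¬ badW r (prefixList x (j + 1)) := by
    rw [← mem_rangeM_K3]
    exact hx2 (j + 1)
  constructor
  · intro hP
    by_contra hne
    apply hnb
    refine ⟨j, by rw [prefixList_length]; omega, Or.inl ⟨?_, hP⟩⟩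
    rw [getD_prefixList x (j + 1) j (by omega)]
    simp [hne]
  · intro hQ
    by_contra hne
    have hx1j : x j = 1 := by have := hx1 j; omega
    apply hnb
    refine ⟨j, by rw [prefixList_length]; omega, Or.inr ⟨?_, hQ⟩⟩
    rw [getD_prefixList x (j + 1) j (by omega)]
    simp [hx1j]

lemma SEP1_le_Cle2' : WRed SEP1 Cle2 := by
  classical
  refine ⟨Set.univ, Set.univ, K3, psnd, ?_, continuous_psnd.continuousOn, ?_⟩
  · apply continuousOn_of_finite_dep
    intro r _ m
    refine ⟨{2 * m.unpair.2, 2 * m.unpair.2 + 1}, fun r' _ hagree => ?_⟩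
    have h1 : pfst r' m.unpair.2 = pfst r m.unpair.2 := hagree _ (by simp)
    have h2 : psnd r' m.unpair.2 = psnd r m.unpair.2 := hagree _ (by simp)
    unfold K3
    refine if_congr ?_ rfl rfl
    unfold C3
    rw [h1, h2]
  · intro r hr
    obtain ⟨hdisj, henc⟩ := hr
    have hdisj' : ∀ j, j ∈ rangeM (pfst r) → j ∉ rangeM (psnd r) := by
      intro j h1 h2
      have : j ∈ rangeM (pfst r) ∩ rangeM (psnd r) := ⟨h1, h2⟩
      rw [hdisj] at this
      exact this
    have hchi_mem : chi (rangeM (pfst r)) ∈ Ap (K3 r) := by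
      refine ⟨fun n => chi_le_one _ n, ?_⟩
      intro k
      rw [mem_rangeM_K3]
      rintro ⟨j, hj, h⟩
      rw [prefixList_length] at hj
      rw [getD_prefixList _ k j hj] at h
      rcases h with ⟨h1, h2⟩ | ⟨h1, h2⟩
      · have : chi (rangeM (pfst r)) j = 1 := (chi_eq_one_iff _ j).2 h2
        simp [this] at h1
      · have hA : j ∈ rangeM (pfst r) := (chi_eq_one_iff _ j).1 (of_decide_eq_true h1)
        exact hdisj' j hA h2
    refine ⟨trivial, ⟨⟨chi (rangeM (pfst r)), hchi_mem⟩, ?_⟩, ?_⟩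
    · -- encard ≤ 2
      rcases Set.encard_le_one_iff_eq.1 henc with hc | ⟨m, hc⟩
      · have hsub : Ap (K3 r) ⊆ {chi (rangeM (pfst r))} := by
          intro x hx
          have hvals := Ap_vals r x hx
          rw [Set.mem_singleton_iff]
          funext j
          have hJ : j ∈ rangeM (pfst r) ∪ rangeM (psnd r) := by
            by_contra hn
            have : j ∈ (rangeM (pfst r) ∪ rangeM (psnd r))ᶜ := hn
            rw [hc] at this
            exact this
          rw [chi_apply]
          rcases hJ with h | h
          · rw [if_pos h]
            exact (hvals j).1 h
          · rw [if_neg (fun hP => hdisj' j hP h)]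
            exact (hvals j).2 h
        calc (Ap (K3 r)).encard ≤ ({chi (rangeM (pfst r))} : Set Baire).encard :=
              Set.encard_le_encard hsub
          _ = 1 := Set.encard_singleton _
          _ ≤ 2 := by norm_num
      · set f0 : Baire := fun j => if j = m then 0 else chi (rangeM (pfst r)) j with hf0
        set f1 : Baire := fun j => if j = m then 1 else chi (rangeM (pfst r)) j with hf1
        have hsub : Ap (K3 r) ⊆ {f0, f1} := by
          intro x hx
          have hvals := Ap_vals r x hx
          have hgen : ∀ j, j ≠ m → x j = chi (rangeM (pfst r)) j := by
            intro j hjm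
            have hJ : j ∈ rangeM (pfst r) ∪ rangeM (psnd r) := by
              by_contra hn
              have : j ∈ (rangeM (pfst r) ∪ rangeM (psnd r))ᶜ := hn
              rw [hc] at this
              exact hjm this
            rw [chi_apply]
            rcases hJ with h | h
            · rw [if_pos h]
              exact (hvals j).1 h
            · rw [if_neg (fun hP => hdisj' j hP h)]
              exact (hvals j).2 h
          by_cases hxm : x m = 0
          · left
            funext j
            show x j = if j = m then 0 else chi (rangeM (pfst r)) j
            by_cases hj : j = m
            · rw [if_pos hj, hj]
              exact hxm
            · rw [if_neg hj]
              exact hgen j hj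
          · right
            rw [Set.mem_singleton_iff]
            have hxm1 : x m = 1 := by have := hx.1 m; omega
            funext j
            show x j = if j = m then 1 else chi (rangeM (pfst r)) j
            by_cases hj : j = m
            · rw [if_pos hj, hj]
              exact hxm1
            · rw [if_neg hj]
              exact hgen j hj
        calc (Ap (K3 r)).encard ≤ ({f0, f1} : Set Baire).encard := Set.encard_le_encard hsub
          _ ≤ ({f1} : Set Baire).encard + 1 := Set.encard_insert_le _ _
          _ ≤ 2 := by rw [Set.encard_singleton]; norm_num
    · intro q hq
      refine ⟨trivial, ?_⟩
      show psnd (pairB r q) ∈ SEP.sol r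
      rw [psnd_pairB]
      have hq1 : ∀ n, q n ≤ 1 := hq.1
      have hvals := Ap_vals r q hq
      refine ⟨{n | q n = 1}, chi_eq_of_binary q hq1, ?_, ?_⟩
      · intro j hj
        exact (hvals j).1 hj
      · intro j hj hQ
        have := (hvals j).2 hQ
        rw [Set.mem_setOf_eq] at hj
        omega

end SEPCle2

section Tree

def badAtW (p : Baire) (u : List Bool) (t : ℕ) : Prop := ∃ i < t, p i = wordCode u + 1

def deadAt (p : Baire) (w : List Bool) (t : ℕ) : Prop :=
  ∃ ℓ ≤ t, ∀ v : List Bool, v.length = w.length + ℓ → w <+: v → ∃ u, u <+: v ∧ badAtW p u t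

def extW (p : Baire) (w : List Bool) : Prop :=
  ∀ ℓ, ∃ v : List Bool, v.length = w.length + ℓ ∧ w <+: v ∧
    ∀ u, u <+: v → wordCode u ∉ rangeM p

lemma badAtW_mono {p : Baire} {u : List Bool} {s t : ℕ} (h : s ≤ t) :
    badAtW p u s → badAtW p u t := fun ⟨i, hi, hp⟩ => ⟨i, by omega, hp⟩

lemma deadAt_mono {p : Baire} {w : List Bool} {s t : ℕ} (h : s ≤ t) :
    deadAt p w s → deadAt p w t := by
  rintro ⟨ℓ, hℓ, hv⟩
  refine ⟨ℓ, by omega, fun v h1 h2 => ?_⟩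
  obtain ⟨u, hu, hb⟩ := hv v h1 h2
  exact ⟨u, hu, badAtW_mono h hb⟩

lemma deadAt_zero (p : Baire) (w : List Bool) : ¬ deadAt p w 0 := by
  rintro ⟨ℓ, hℓ, hv⟩
  have hℓ0 : ℓ = 0 := by omega
  subst hℓ0
  obtain ⟨u, hu, i, hi, _⟩ := hv w (by omega) (List.prefix_refl w)
  omega

lemma deadAt_congr {p p' : Baire} (w : List Bool) (t : ℕ) (h : ∀ i < t, p' i = p i) :
    deadAt p' w t ↔ deadAt p w t := by
  constructor <;> rintro ⟨ℓ, hℓ, hv⟩ <;> refine ⟨ℓ, hℓ, fun v h1 h2 => ?_⟩ <;>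
    obtain ⟨u, hu, i, hi, hp⟩ := hv v h1 h2
  · exact ⟨u, hu, i, hi, by rw [← h i hi]; exact hp⟩
  · exact ⟨u, hu, i, hi, by rw [h i hi]; exact hp⟩

lemma not_ext_iff_dead (p : Baire) (w : List Bool) :
    (∃ t, deadAt p w t) ↔ ¬ extW p w := by
  constructor
  · rintro ⟨t, ℓ, hℓ, hv⟩ hext
    obtain ⟨v, h1, h2, halive⟩ := hext ℓ
    obtain ⟨u, hu, i, hi, hp⟩ := hv v h1 h2
    exact halive u hu ⟨i, hp⟩
  · intro hext
    rw [extW] at hext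
    push_neg at hext
    obtain ⟨ℓ, hℓ⟩ := hext
    obtain ⟨T, hT⟩ := exists_uniform_bound (allW (w.length + ℓ))
      (fun v t => w <+: v → ∃ u, u <+: v ∧ badAtW p u t)
      (fun v s t hst hP hpre => by
        obtain ⟨u, hu, hb⟩ := hP hpre
        exact ⟨u, hu, badAtW_mono hst hb⟩)
      (fun v hv => by
        by_cases hpre : w <+: v
        · obtain ⟨u, hu, hmem⟩ := hℓ v ((mem_allW _ _).1 hv) hpre
          obtain ⟨i, hp⟩ := hmem
          exact ⟨i + 1, fun _ => ⟨u, hu, i, by omega, hp⟩⟩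
        · exact ⟨0, fun hc => absurd hc hpre⟩)
    refine ⟨max ℓ T, ℓ, le_max_left _ _, fun v h1 h2 => ?_⟩
    obtain ⟨u, hu, hb⟩ := hT v ((mem_allW v _).2 h1) h2
    exact ⟨u, hu, badAtW_mono (le_max_right _ _) hb⟩

lemma extW_alive {p : Baire} {w : List Bool} (h : extW p w) :
    ∀ u, u <+: w → wordCode u ∉ rangeM p := by
  obtain ⟨v, h1, h2, halive⟩ := h 0
  have hw : w = v := List.IsPrefix.eq_of_length h2 (by omega)
  intro u hu
  exact halive u (hw ▸ hu)

lemma ext_succ {p : Baire} {w : List Bool} (h : extW p w) :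
    extW p (w ++ [false]) ∨ extW p (w ++ [true]) := by
  by_contra hc
  push_neg at hc
  obtain ⟨h0, h1⟩ := hc
  rw [extW] at h0 h1
  push_neg at h0 h1
  obtain ⟨ℓ0, g0⟩ := h0
  obtain ⟨ℓ1, g1⟩ := h1
  obtain ⟨v, hvlen, hvpre, halive⟩ := h (1 + max ℓ0 ℓ1)
  have hwlt : w.length < v.length := by rw [hvlen]; omega
  have hwtake : v.take w.length = w := (List.prefix_iff_eq_take.1 hvpre).symm
  have htake1 : v.take (w.length + 1) = w ++ [v[w.length]'hwlt] := by
    rw [List.take_succ, hwtake, List.getElem?_eq_getElem hwlt]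
    rfl
  have hkill : ∀ (b : Bool) (ℓb : ℕ), ℓb ≤ max ℓ0 ℓ1 → v[w.length]'hwlt = b →
      (∀ v' : List Bool, v'.length = (w ++ [b]).length + ℓb → (w ++ [b]) <+: v' →
        ∃ u, u <+: v' ∧ wordCode u ∈ rangeM p) → False := by
    intro b ℓb hℓb hband hg
    set v' := v.take (w.length + 1 + ℓb) with hv'def
    have hv'len : v'.length = (w ++ [b]).length + ℓb := by
      rw [hv'def, List.length_take, List.length_append]
      simp only [List.length_singleton]
      rw [hvlen]
      omega
    have hv'pre : (w ++ [b]) <+: v' := by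
      rw [hv'def, List.prefix_take_iff]
      constructor
      · rw [← hband, ← htake1]
        exact List.take_prefix _ _
      · rw [List.length_append]
        simp only [List.length_singleton]
        omega
    obtain ⟨u, hu, hmem⟩ := hg v' hv'len hv'pre
    exact halive u (hu.trans (List.take_prefix _ _)) hmem
  cases hb : v[w.length]'hwlt
  · exact hkill false ℓ0 (le_max_left _ _) hb g0
  · exact hkill true ℓ1 (le_max_right _ _) hb g1

open Classical in
noncomputable def greedy (p : Baire) (v : List Bool) : ℕ → List Bool
  | 0 => v
  | n + 1 => if extW p (greedy p v n ++ [false]) then greedy p v n ++ [false]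
      else greedy p v n ++ [true]

noncomputable def chainD (p : Baire) (v : List Bool) (j : ℕ) : List Bool :=
  if j ≤ v.length then v.take j else greedy p v (j - v.length)

lemma greedy_ext {p : Baire} {v : List Bool} (hv : extW p v) (n : ℕ) :
    extW p (greedy p v n) := by
  induction n with
  | zero => exact hv
  | succ n ih =>
    rw [greedy]
    rcases ext_succ ih with h | h
    · rw [if_pos h]; exact h
    · by_cases h0 : extW p (greedy p v n ++ [false])
      · rw [if_pos h0]; exact h0
      · rw [if_neg h0]; exact h

lemma greedy_length (p : Baire) (v : List Bool) (n : ℕ) :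
    (greedy p v n).length = v.length + n := by
  induction n with
  | zero => rfl
  | succ n ih =>
    rw [greedy]
    split <;> rw [List.length_append, ih] <;> simp <;> omega

lemma chainD_length (p : Baire) (v : List Bool) (j : ℕ) : (chainD p v j).length = j := by
  unfold chainD
  split <;> rename_i h
  · rw [List.length_take]; omega
  · rw [greedy_length]; omega

lemma chainD_pre (p : Baire) (v : List Bool) (j : ℕ) : chainD p v j <+: chainD p v (j + 1) := by
  unfold chainD
  by_cases h1 : j + 1 ≤ v.length
  · rw [if_pos (by omega), if_pos h1]
    have he : (v.take (j + 1)).take j = v.take j := by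
      rw [List.take_take, inf_eq_left.2 (by omega)]
    rw [← he]
    exact List.take_prefix _ _
  · by_cases h2 : j ≤ v.length
    · have hj : j = v.length := by omega
      rw [if_pos h2, if_neg h1, hj, List.take_length,
        show v.length + 1 - v.length = 1 by omega]
      rw [show (1 : ℕ) = 0 + 1 from rfl, greedy]
      split <;> exact List.prefix_append _ _
    · rw [if_neg h2, if_neg h1, show j + 1 - v.length = (j - v.length) + 1 by omega, greedy]
      split <;> exact List.prefix_append _ _

lemma ext_path (p : Baire) (v : List Bool) (hv : extW p v) :
    ∃ x : Baire, (∀ n, x n ≤ 1) ∧ (∀ k, wordCode (prefixList x k) ∉ rangeM p) ∧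
      prefixList x v.length = v := by
  refine ⟨fun k => cond ((chainD p v (k + 1)).getD k false) 1 0,
    fun n => cond_le_one _, ?_, ?_⟩
  · intro k
    rw [chain_path (chainD p v) (chainD_length p v) (chainD_pre p v) k]
    by_cases h : k ≤ v.length
    · have hpre : chainD p v k <+: v := by
        unfold chainD
        rw [if_pos h]
        exact List.take_prefix _ _
      exact extW_alive hv _ hpre
    · have hck : chainD p v k = greedy p v (k - v.length) := by
        unfold chainD
        rw [if_neg h]
      rw [hck]
      exact extW_alive (greedy_ext hv _) _ (List.prefix_refl _)
  · rw [chain_path (chainD p v) (chainD_length p v) (chainD_pre p v) v.length]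
    unfold chainD
    rw [if_pos le_rfl, List.take_length]

lemma three_le {s : Set Baire} (h : s.encard ≤ 2) {a b c : Baire}
    (ha : a ∈ s) (hb : b ∈ s) (hc : c ∈ s) (hab : a ≠ b) : c = a ∨ c = b := by
  by_contra hcc
  push_neg at hcc
  have hsub : ({c, a, b} : Set Baire) ⊆ s := by
    intro y hy
    rcases hy with rfl | rfl | rfl
    · exact hc
    · exact ha
    · exact hb
  have h3 : ({c, a, b} : Set Baire).encard = 3 := by
    rw [Set.encard_insert_of_notMem (by simp [hcc.1, hcc.2]),
      Set.encard_insert_of_notMem (by simp [hab]), Set.encard_singleton]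
    rfl
  have := (h3 ▸ Set.encard_le_encard hsub).trans h
  norm_num at this

lemma split_unique (p : Baire) (h2 : (Ap p).encard ≤ 2) {w w' : List Bool}
    (h00 : extW p (w ++ [false])) (h01 : extW p (w ++ [true]))
    (h10 : extW p (w' ++ [false])) (h11 : extW p (w' ++ [true])) : w = w' := by
  obtain ⟨x0, hx0b, hx0a, hx0p⟩ := ext_path p _ h00
  obtain ⟨x1, hx1b, hx1a, hx1p⟩ := ext_path p _ h01
  obtain ⟨y0, hy0b, hy0a, hy0p⟩ := ext_path p _ h10
  obtain ⟨y1, hy1b, hy1a, hy1p⟩ := ext_path p _ h11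
  have hx0m : x0 ∈ Ap p := ⟨hx0b, hx0a⟩
  have hx1m : x1 ∈ Ap p := ⟨hx1b, hx1a⟩
  have hy0m : y0 ∈ Ap p := ⟨hy0b, hy0a⟩
  have hy1m : y1 ∈ Ap p := ⟨hy1b, hy1a⟩
  have hx0p' : prefixList x0 (w.length + 1) = w ++ [false] := by
    rw [← hx0p]; congr 1; simp
  have hx1p' : prefixList x1 (w.length + 1) = w ++ [true] := by
    rw [← hx1p]; congr 1; simp
  have hy0p' : prefixList y0 (w'.length + 1) = w' ++ [false] := by
    rw [← hy0p]; congr 1; simp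
  have hy1p' : prefixList y1 (w'.length + 1) = w' ++ [true] := by
    rw [← hy1p]; congr 1; simp
  have bitval : ∀ (z : Baire) (u : List Bool) (b : Bool),
      prefixList z (u.length + 1) = u ++ [b] → decide (z u.length = 1) = b := by
    intro z u b hz
    have h1 : u.length < (prefixList z (u.length + 1)).length := by
      rw [prefixList_length]; omega
    have := prefixList_getElem z (u.length + 1) u.length (by omega) h1
    rw [← this]
    have hgc := List.getElem_concat_length (l := u) (a := b) (i := u.length) rfl
      (by rw [List.length_append]; simp)
    exact (List.getElem_of_eq hz h1).trans hgc
  have hxne : x0 ≠ x1 := by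
    intro he
    have e0 := bitval x0 w false hx0p'
    have e1 := bitval x1 w true hx1p'
    rw [he, e1] at e0
    simp at e0
  have hyne : y0 ≠ y1 := by
    intro he
    have e0 := bitval y0 w' false hy0p'
    have e1 := bitval y1 w' true hy1p'
    rw [he, e1] at e0
    simp at e0
  have prefw : ∀ z : Baire, ∀ u : List Bool, ∀ b : Bool,
      prefixList z (u.length + 1) = u ++ [b] → prefixList z u.length = u := by
    intro z u b hz
    have := congrArg (List.take u.length) hz
    rwa [prefixList_take z (by omega), List.take_left] at this
  have hy0e := three_le h2 hx0m hx1m hy0m hxne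
  have hy1e := three_le h2 hx0m hx1m hy1m hxne
  have hx0w' : prefixList x0 w'.length = w' ∧ prefixList x1 w'.length = w' := by
    rcases hy0e with h | h <;> rcases hy1e with h' | h'
    · exact absurd (h.trans h'.symm) hyne
    · exact ⟨by rw [← h]; exact prefw y0 w' false hy0p',
        by rw [← h']; exact prefw y1 w' true hy1p'⟩
    · exact ⟨by rw [← h']; exact prefw y1 w' true hy1p',
        by rw [← h]; exact prefw y0 w' false hy0p'⟩
    · exact absurd (h.trans h'.symm) hyne
  have hdiff' : prefixList x0 (w'.length + 1) ≠ prefixList x1 (w'.length + 1) := by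
    rcases hy0e with h | h <;> rcases hy1e with h' | h'
    · exact absurd (h.trans h'.symm) hyne
    · rw [← h, ← h', hy0p', hy1p']
      simp
    · rw [← h, ← h', hy0p', hy1p']
      simp
    · exact absurd (h.trans h'.symm) hyne
  have hwx0 : prefixList x0 w.length = w := prefw x0 w false hx0p'
  have hwx1 : prefixList x1 w.length = w := prefw x1 w true hx1p'
  rcases Nat.lt_trichotomy w.length w'.length with hlt | heq | hgt
  · exfalso
    have e0 : prefixList x0 (w.length + 1) = w'.take (w.length + 1) := by
      rw [← hx0w'.1, prefixList_take x0 (by omega)]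
    have e1 : prefixList x1 (w.length + 1) = w'.take (w.length + 1) := by
      rw [← hx0w'.2, prefixList_take x1 (by omega)]
    rw [hx0p'] at e0
    rw [hx1p'] at e1
    have : w ++ [false] = w ++ [true] := e0.trans e1.symm
    simp at this
  · rw [← hwx0, heq, hx0w'.1]
  · exfalso
    apply hdiff'
    have e0 : prefixList x0 (w'.length + 1) = w.take (w'.length + 1) := by
      rw [← hwx0, prefixList_take x0 (by omega)]
    have e1 : prefixList x1 (w'.length + 1) = w.take (w'.length + 1) := by
      rw [← hwx1, prefixList_take x1 (by omega)]
    rw [e0, e1]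

end Tree

section Cle2SEP

def CU (p : Baire) (a t : ℕ) : Prop :=
  deadAt p (decodeW a ++ [false]) (t + 1) ∧ ¬ deadAt p (decodeW a ++ [false]) t ∧
    ¬ deadAt p (decodeW a ++ [true]) t

def CV (p : Baire) (a t : ℕ) : Prop :=
  deadAt p (decodeW a ++ [true]) (t + 1) ∧ ¬ deadAt p (decodeW a ++ [true]) t ∧
    ¬ deadAt p (decodeW a ++ [false]) (t + 1)

open Classical in
noncomputable def KU (p : Baire) : Baire :=
  fun m => if CU p m.unpair.1 m.unpair.2 then m.unpair.1 + 1 else 0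

open Classical in
noncomputable def KV (p : Baire) : Baire :=
  fun m => if CV p m.unpair.1 m.unpair.2 then m.unpair.1 + 1 else 0

noncomputable def K4 (p : Baire) : Baire := pairB (KU p) (KV p)

lemma mem_U (p : Baire) (w : List Bool) :
    wordCode w ∈ rangeM (KU p) ↔ ∃ t, deadAt p (w ++ [false]) (t + 1) ∧
      ¬ deadAt p (w ++ [false]) t ∧ ¬ deadAt p (w ++ [true]) t := by
  unfold KU
  rw [rangeM_enum]
  simp only [Set.mem_setOf_eq, CU, decode_code]

lemma mem_V (p : Baire) (w : List Bool) :
    wordCode w ∈ rangeM (KV p) ↔ ∃ t, deadAt p (w ++ [true]) (t + 1) ∧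
      ¬ deadAt p (w ++ [true]) t ∧ ¬ deadAt p (w ++ [false]) (t + 1) := by
  unfold KV
  rw [rangeM_enum]
  simp only [Set.mem_setOf_eq, CV, decode_code]

lemma firstDead {p : Baire} {w : List Bool} (h : ∃ t, deadAt p w t) :
    ∃ t, deadAt p w (t + 1) ∧ ¬ deadAt p w t := by
  classical
  have h1 := Nat.find_spec h
  have hpos : Nat.find h ≠ 0 := fun h0 => deadAt_zero p w (h0 ▸ h1)
  refine ⟨Nat.find h - 1, ?_, ?_⟩
  · rw [show Nat.find h - 1 + 1 = Nat.find h by omega]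
    exact h1
  · exact Nat.find_min h (by omega)

lemma U_V_disjoint (p : Baire) : rangeM (KU p) ∩ rangeM (KV p) = ∅ := by
  rw [Set.eq_empty_iff_forall_notMem]
  rintro a ⟨hU, hV⟩
  rw [← code_decode a] at hU hV
  rw [mem_U] at hU
  rw [mem_V] at hV
  obtain ⟨t, u1, u2, u3⟩ := hU
  obtain ⟨s, v1, v2, v3⟩ := hV
  have hst : s < t := by
    by_contra hc
    push_neg at hc
    exact v3 (deadAt_mono (by omega) u1)
  exact u3 (deadAt_mono (by omega) v1)

lemma mem_UV_union (p : Baire) (a : ℕ) :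
    a ∉ rangeM (KU p) ∪ rangeM (KV p) ↔
      (extW p (decodeW a ++ [false]) ∧ extW p (decodeW a ++ [true])) := by
  constructor
  · intro h
    rw [Set.mem_union, not_or, ← code_decode a, mem_U, mem_V] at h
    obtain ⟨hU, hV⟩ := h
    constructor
    · by_contra hc
      obtain ⟨t, h1, h2⟩ := firstDead ((not_ext_iff_dead p _).2 hc)
      by_cases hd1t : deadAt p (decodeW a ++ [true]) t
      · obtain ⟨s, g1, g2⟩ := firstDead ⟨t, hd1t⟩
        have hs : s < t := by
          by_contra hcc
          push_neg at hcc
          exact g2 (deadAt_mono hcc hd1t)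
        exact hV ⟨s, g1, g2, fun hcc => h2 (deadAt_mono (by omega) hcc)⟩
      · exact hU ⟨t, h1, h2, hd1t⟩
    · by_contra hc
      have hd1 : ∃ t, deadAt p (decodeW a ++ [true]) t := (not_ext_iff_dead p _).2 hc
      by_cases hd0 : ∃ t, deadAt p (decodeW a ++ [false]) t
      · obtain ⟨t, h1, h2⟩ := firstDead hd0
        by_cases hd1t : deadAt p (decodeW a ++ [true]) t
        · obtain ⟨s, g1, g2⟩ := firstDead ⟨t, hd1t⟩
          have hs : s < t := by
            by_contra hcc
            push_neg at hcc
            exact g2 (deadAt_mono hcc hd1t)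
          exact hV ⟨s, g1, g2, fun hcc => h2 (deadAt_mono (by omega) hcc)⟩
        · exact hU ⟨t, h1, h2, hd1t⟩
      · obtain ⟨s, g1, g2⟩ := firstDead hd1
        exact hV ⟨s, g1, g2, fun hcc => hd0 ⟨s + 1, hcc⟩⟩
  · rintro ⟨he0, he1⟩
    rw [Set.mem_union, not_or, ← code_decode a, mem_U, mem_V]
    constructor
    · rintro ⟨t, h1, _, _⟩
      exact (not_ext_iff_dead p _).1 ⟨t + 1, h1⟩ he0
    · rintro ⟨t, h1, _, _⟩
      exact (not_ext_iff_dead p _).1 ⟨t + 1, h1⟩ he1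

def follow (r : Baire) : ℕ → List Bool
  | 0 => []
  | j + 1 => follow r j ++ [decide (psnd r (wordCode (follow r j)) = 1)]

def H4 (r : Baire) : Baire := fun k => cond ((follow r (k + 1)).getD k false) 1 0

lemma follow_length (r : Baire) (j : ℕ) : (follow r j).length = j := by
  induction j with
  | zero => rfl
  | succ j ih => rw [follow, List.length_append, ih]; rfl

lemma H4_prefixList (r : Baire) (m : ℕ) : prefixList (H4 r) m = follow r m :=
  chain_path (follow r) (follow_length r) (fun j => List.prefix_append _ _) m

lemma alive_of_Ap {p x : Baire} (hx : ∀ k, wordCode (prefixList x k) ∉ rangeM p) :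
    ∀ ℓ u, u <+: prefixList x ℓ → wordCode u ∉ rangeM p := by
  intro ℓ u hu
  have hlen : u.length ≤ ℓ := by
    have := hu.length_le
    rwa [prefixList_length] at this
  have heq : u = prefixList x u.length := by
    have h := List.prefix_iff_eq_take.1 hu
    rwa [prefixList_take x hlen] at h
  rw [heq]
  exact hx u.length

lemma Cle2_le_SEP1' : WRed Cle2 SEP1 := by
  classical
  refine ⟨Set.univ, Set.univ, K4, H4, ?_, ?_, ?_⟩
  · -- continuity of K4
    apply continuousOn_of_finite_dep
    intro p _ m
    refine ⟨Finset.range ((m / 2).unpair.2 + 2), fun p' _ hagree => ?_⟩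
    have hag : ∀ i < (m / 2).unpair.2 + 2, p' i = p i :=
      fun i hi => hagree i (Finset.mem_range.2 hi)
    have hdc : ∀ (w : List Bool) (t : ℕ), t ≤ (m / 2).unpair.2 + 2 →
        (deadAt p' w t ↔ deadAt p w t) :=
      fun w t ht => deadAt_congr w t (fun i hi => hag i (by omega))
    have hCU : CU p' (m / 2).unpair.1 (m / 2).unpair.2 ↔
        CU p (m / 2).unpair.1 (m / 2).unpair.2 := by
      unfold CU
      rw [hdc _ _ (by omega), hdc _ _ (by omega), hdc _ _ (by omega)]
    have hCV : CV p' (m / 2).unpair.1 (m / 2).unpair.2 ↔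
        CV p (m / 2).unpair.1 (m / 2).unpair.2 := by
      unfold CV
      rw [hdc _ _ (by omega), hdc _ _ (by omega), hdc _ _ (by omega)]
    show pairB (KU p') (KV p') m = pairB (KU p) (KV p) m
    unfold pairB
    by_cases hm : m % 2 = 0
    · rw [if_pos hm, if_pos hm]
      show (if CU p' (m / 2).unpair.1 (m / 2).unpair.2 then (m / 2).unpair.1 + 1 else 0) =
        (if CU p (m / 2).unpair.1 (m / 2).unpair.2 then (m / 2).unpair.1 + 1 else 0)
      exact if_congr hCU rfl rfl
    · rw [if_neg hm, if_neg hm]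
      show (if CV p' (m / 2).unpair.1 (m / 2).unpair.2 then (m / 2).unpair.1 + 1 else 0) =
        (if CV p (m / 2).unpair.1 (m / 2).unpair.2 then (m / 2).unpair.1 + 1 else 0)
      exact if_congr hCV rfl rfl
  · -- continuity of H4
    apply continuousOn_of_finite_dep
    intro r _ k
    refine ⟨((List.range (k + 1)).flatMap allW).toFinset.image (fun w => 2 * wordCode w + 1),
      fun r' _ hagree => ?_⟩
    have hfol : ∀ j ≤ k + 1, follow r' j = follow r j := by
      intro j hj
      induction j with
      | zero => rfl
      | succ j ih =>
        have hih := ih (by omega)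
        rw [follow, follow, hih]
        have hmem : 2 * wordCode (follow r j) + 1 ∈
            ((List.range (k + 1)).flatMap allW).toFinset.image (fun w => 2 * wordCode w + 1) := by
          apply Finset.mem_image.2
          refine ⟨follow r j, ?_, rfl⟩
          rw [List.mem_toFinset, List.mem_flatMap]
          exact ⟨j, List.mem_range.2 (by omega), (mem_allW _ _).2 (follow_length r j)⟩
        have : psnd r' (wordCode (follow r j)) = psnd r (wordCode (follow r j)) :=
          hagree _ hmem
        rw [this]
    unfold H4
    rw [hfol (k + 1) le_rfl]
  · -- correctness
    intro p hp
    obtain ⟨hne, h2⟩ := hp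
    have hextnil : extW p [] := by
      obtain ⟨x, hxb, hxa⟩ := hne
      intro ℓ
      exact ⟨prefixList x ℓ, by simp [prefixList_length], List.nil_prefix,
        fun u hu => alive_of_Ap hxa ℓ u hu⟩
    have hKfst : pfst (K4 p) = KU p := pfst_pairB _ _
    have hKsnd : psnd (K4 p) = KV p := psnd_pairB _ _
    refine ⟨trivial, ⟨?_, ?_⟩, ?_⟩
    · show rangeM (pfst (K4 p)) ∩ rangeM (psnd (K4 p)) = ∅
      rw [hKfst, hKsnd]
      exact U_V_disjoint p
    · show ((rangeM (pfst (K4 p)) ∪ rangeM (psnd (K4 p)))ᶜ).encard ≤ 1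
      rw [hKfst, hKsnd, Set.encard_le_one_iff]
      intro a b ha hb
      rw [Set.mem_compl_iff, mem_UV_union] at ha hb
      have := split_unique p h2 ha.1 ha.2 hb.1 hb.2
      rw [← code_decode a, ← code_decode b, this]
    · intro q hq
      obtain ⟨A, hqA, hPA, hAQ⟩ := hq
      rw [hKfst] at hPA
      rw [hKsnd] at hAQ
      have hinv : ∀ j, extW p (follow (pairB p q) j) := by
        intro j
        induction j with
        | zero => exact hextnil
        | succ j ih =>
          rw [follow, psnd_pairB]
          set w := follow (pairB p q) j with hwdef
          by_cases hb0 : extW p (w ++ [false]) <;> by_cases hb1 : extW p (w ++ [true])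
          · cases hdec : decide (q (wordCode w) = 1)
            · exact hb0
            · exact hb1
          · -- only child false is extendible
            have hd1 : ∃ t, deadAt p (w ++ [true]) t := (not_ext_iff_dead p _).2 hb1
            have hd0 : ¬ ∃ t, deadAt p (w ++ [false]) t :=
              fun hc => (not_ext_iff_dead p _).1 hc hb0
            obtain ⟨s, g1, g2⟩ := firstDead hd1
            have hmemV : wordCode w ∈ rangeM (KV p) :=
              (mem_V p w).2 ⟨s, g1, g2, fun hc => hd0 ⟨s + 1, hc⟩⟩
            have hnA : wordCode w ∉ A := fun hA => (hAQ hA) hmemV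
            have hq0 : q (wordCode w) = 0 := by
              rw [hqA]
              exact (chi_eq_zero_iff A _).2 hnA
            rw [show decide (q (wordCode w) = 1) = false by simp [hq0]]
            exact hb0
          · -- only child true is extendible
            have hd0 : ∃ t, deadAt p (w ++ [false]) t := (not_ext_iff_dead p _).2 hb0
            have hd1 : ¬ ∃ t, deadAt p (w ++ [true]) t :=
              fun hc => (not_ext_iff_dead p _).1 hc hb1
            obtain ⟨t, g1, g2⟩ := firstDead hd0
            have hmemU : wordCode w ∈ rangeM (KU p) :=
              (mem_U p w).2 ⟨t, g1, g2, fun hc => hd1 ⟨t, hc⟩⟩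
            have hA : wordCode w ∈ A := hPA hmemU
            have hq1 : q (wordCode w) = 1 := by
              rw [hqA]
              exact (chi_eq_one_iff A _).2 hA
            rw [show decide (q (wordCode w) = 1) = true by simp [hq1]]
            exact hb1
          · exfalso
            rcases ext_succ ih with h | h
            · exact hb0 h
            · exact hb1 h
      refine ⟨trivial, ?_⟩
      show H4 (pairB p q) ∈ Ap p
      refine ⟨fun n => cond_le_one _, ?_⟩
      intro k
      rw [H4_prefixList]
      exact extW_alive (hinv k) _ (List.prefix_refl _)

end Cle2SEP

section Red

lemma EC1_le_SORT : WRed EC1 SORT := EC1_le_SORT'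

lemma SORT_le_EC1 : WRed SORT EC1 := SORT_le_EC1'

lemma SEP1_le_Cle2 : WRed SEP1 Cle2 := SEP1_le_Cle2'

lemma Cle2_le_SEP1 : WRed Cle2 SEP1 := Cle2_le_SEP1'

lemma SEP1_le_EC1 : WRed SEP1 EC1 := SEP1_le_EC1'

end Red

/-- `SEP₁ ≡_W C_{#≤2} ≤_W EC₁ ≡_W SORT`. -/
theorem SEP1_Cle2_EC1_SORT : WEquiv SEP1 Cle2 ∧ WRed Cle2 EC1 ∧ WEquiv EC1 SORT :=
  ⟨⟨SEP1_le_Cle2, Cle2_le_SEP1⟩, WRed_trans Cle2_le_SEP1 SEP1_le_EC1,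
    ⟨EC1_le_SORT, SORT_le_EC1⟩⟩
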